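/- A pair of non-negative, non-increasing integer sequences D(X) = [d_1,...,d_{|X|}] and D(Y) = [e_1,...,e_{|Y|}] with e_1 ≤ |X| is the pair of degree sequences of the two sides of a difference graph with bipartition (X, Y) if and only if D(X) equals the conjugate sequence of D(Y). -/

import Mathlib

lemma ncard_nb_inl {p s : ℕ} (G : SimpleGraph (Fin p ⊕ Fin s))
    (hXX : ∀ i j : Fin p, ¬ G.Adj (.inl i) (.inl j)) (i : Fin p) :
    (G.neighborSet (.inl i)).ncard = {j : Fin s | G.Adj (.inl i) (.inr j)}.ncard := by
  have h : G.neighborSet (.inl i) = Sum.inr '' {j : Fin s | G.Adj (.inl i) (.inr j)} := by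
    ext x
    cases x with
    | inl a => simp [SimpleGraph.neighborSet, hXX i a]
    | inr b => simp [SimpleGraph.neighborSet]
  rw [h, Set.ncard_image_of_injective _ Sum.inr_injective]

lemma ncard_nb_inr {p s : ℕ} (G : SimpleGraph (Fin p ⊕ Fin s))
    (hYY : ∀ i j : Fin s, ¬ G.Adj (.inr i) (.inr j)) (j : Fin s) :
    (G.neighborSet (.inr j)).ncard = {i : Fin p | G.Adj (.inl i) (.inr j)}.ncard := by
  have h : G.neighborSet (.inr j) = Sum.inl '' {i : Fin p | G.Adj (.inl i) (.inr j)} := by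
    ext x
    cases x with
    | inl a => simp [SimpleGraph.neighborSet, SimpleGraph.adj_comm]
    | inr b => simp [SimpleGraph.neighborSet, hYY j b]
  rw [h, Set.ncard_image_of_injective _ Sum.inl_injective]

lemma ncard_setOf {α : Type*} [Fintype α] (P : α → Prop) [DecidablePred P] :
    {x | P x}.ncard = (Finset.univ.filter P).card := by
  rw [← Set.ncard_coe_finset]
  congr 1
  ext x
  simp

open Classical in
lemma downset_mem_iff {p : ℕ} (S : Set (Fin p))
    (h : ∀ i i' : Fin p, i' ≤ i → i ∈ S → i' ∈ S) (i : Fin p) :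
    i ∈ S ↔ (i : ℕ) < S.ncard := by
  have hn : S.ncard = (Finset.univ.filter (fun x => x ∈ S)).card :=
    ncard_setOf (fun x => x ∈ S)
  rw [hn]
  constructor
  · intro hi
    have hsub : Finset.Iic i ⊆ Finset.univ.filter (fun x => x ∈ S) := by
      intro i' hi'
      simp only [Finset.mem_filter, Finset.mem_univ, true_and]
      exact h i i' (Finset.mem_Iic.mp hi') hi
    have := Finset.card_le_card hsub
    rw [Fin.card_Iic] at this
    omega
  · intro hlt
    by_contra hni
    have hsub : Finset.univ.filter (fun x => x ∈ S) ⊆ Finset.Iio i := by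
      intro i' hi'
      simp only [Finset.mem_filter, Finset.mem_univ, true_and] at hi'
      rw [Finset.mem_Iio]
      by_contra hge
      push_neg at hge
      exact hni (h i' i hge hi')
    have := Finset.card_le_card hsub
    rw [Fin.card_Iio] at this
    omega

lemma count_lt_card {p : ℕ} (m : ℕ) (hm : m ≤ p) :
    {i : Fin p | (i : ℕ) < m}.ncard = m := by
  rw [ncard_setOf]
  have h : Finset.univ.filter (fun i : Fin p => (i : ℕ) < m)
      = (Finset.range m).attachFin
          (fun n hn => lt_of_lt_of_le (Finset.mem_range.mp hn) hm) := by
    ext i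
    simp [Finset.mem_attachFin]
  rw [h, Finset.card_attachFin, Finset.card_range]

theorem difference_graph_degree_sequences (p s : ℕ) (d : Fin p → ℕ) (e : Fin s → ℕ)
    (hd : ∀ i j : Fin p, i ≤ j → d j ≤ d i) (he : ∀ i j : Fin s, i ≤ j → e j ≤ e i)
    (he1 : ∀ j : Fin s, e j ≤ p) :
    (∃ G : SimpleGraph (Fin p ⊕ Fin s),
        (∀ i j : Fin p, ¬ G.Adj (.inl i) (.inl j)) ∧
        (∀ i j : Fin s, ¬ G.Adj (.inr i) (.inr j)) ∧
        (¬ ∃ (x₁ x₂ : Fin p) (y₁ y₂ : Fin s),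
          G.Adj (.inl x₁) (.inr y₁) ∧ G.Adj (.inl x₂) (.inr y₂) ∧
          ¬ G.Adj (.inl x₁) (.inr y₂) ∧ ¬ G.Adj (.inl x₂) (.inr y₁)) ∧
        (∀ i : Fin p, (G.neighborSet (.inl i)).ncard = d i) ∧
        (∀ j : Fin s, (G.neighborSet (.inr j)).ncard = e j)) ↔
      ∀ i : Fin p, d i = (Finset.univ.filter fun j : Fin s => (i : ℕ) + 1 ≤ e j).card := by
  constructor
  · rintro ⟨G, hXX, hYY, hforb, hdX, hdY⟩ i
    -- monotonicity of neighborhoods on the X side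
    have mono : ∀ (a a' : Fin p) (j : Fin s), a' ≤ a →
        G.Adj (.inl a) (.inr j) → G.Adj (.inl a') (.inr j) := by
      intro a a' j hle hadj
      by_contra hni
      by_cases hsub : ∀ j' : Fin s, G.Adj (.inl a') (.inr j') → G.Adj (.inl a) (.inr j')
      · have hss : G.neighborSet (.inl a') ⊂ G.neighborSet (.inl a) := by
          constructor
          · intro x hx
            cases x with
            | inl b => exact absurd hx (hXX a' b)
            | inr b => exact hsub b hx
          · intro hcon
            exact hni (hcon hadj)
        have hfin : (G.neighborSet (.inl a)).Finite := Set.toFinite _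
        have := Set.ncard_lt_ncard hss hfin
        rw [hdX a, hdX a'] at this
        exact absurd (hd a' a hle) (by omega)
      · push_neg at hsub
        obtain ⟨j', hadj', hni'⟩ := hsub
        exact hforb ⟨a, a', j, j', hadj, hadj', hni', hni⟩
    -- for each j, the neighborhood in X is a down-set of size e j
    have key : ∀ (a : Fin p) (j : Fin s), G.Adj (.inl a) (.inr j) ↔ (a : ℕ) + 1 ≤ e j := by
      intro a j
      have hcard : {i : Fin p | G.Adj (.inl i) (.inr j)}.ncard = e j := by
        rw [← ncard_nb_inr G hYY j, hdY j]
      have hds := downset_mem_iff {i : Fin p | G.Adj (.inl i) (.inr j)}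
        (fun b b' hle hb => mono b b' j hle hb) a
      rw [hcard] at hds
      rw [show (G.Adj (.inl a) (.inr j)) ↔ a ∈ {i : Fin p | G.Adj (.inl i) (.inr j)} from
        Iff.rfl, hds]
      omega
    rw [← hdX i, ncard_nb_inl G hXX i]
    have hset : {j : Fin s | G.Adj (.inl i) (.inr j)} = {j : Fin s | (i : ℕ) + 1 ≤ e j} :=
      Set.ext fun j => key i j
    rw [hset, ncard_setOf]
  · intro h
    refine ⟨⟨fun a b => match a, b with
      | .inl i, .inr j => (i : ℕ) < e j
      | .inr j, .inl i => (i : ℕ) < e j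
      | _, _ => False, ?_, ?_⟩, ?_, ?_, ?_, ?_, ?_⟩
    · constructor; rintro (i | j) (i' | j') hadj <;> exact hadj
    · constructor; rintro (i | j) hadj <;> exact hadj
    · intro i j; exact not_false
    · intro i j; exact not_false
    · rintro ⟨x₁, x₂, y₁, y₂, h1, h2, h3, h4⟩
      simp only [SimpleGraph.Adj] at h1 h2 h3 h4
      omega
    · intro i
      rw [ncard_nb_inl _ (fun _ _ => not_false) i, h i]
      have hset : {j : Fin s | (i : ℕ) < e j} = {j : Fin s | (i : ℕ) + 1 ≤ e j} :=
        Set.ext fun j => Iff.rfl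
      show {j : Fin s | (i : ℕ) < e j}.ncard = _
      rw [hset, ncard_setOf]
    · intro j
      rw [ncard_nb_inr _ (fun _ _ => not_false) j]
      show {i : Fin p | (i : ℕ) < e j}.ncard = e j
      exact count_lt_card (e j) (he1 j)
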